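/- If H(T|X) = 0 and H(T|Y) = 0 (T is a deterministic function of X and also of Y), then the Williams–Beer PID satisfies R = I(T;X) = I(T;Y) = H(T) and U_X = U_Y = S = 0. -/
import Mathlib

open scoped BigOperators
noncomputable section

variable {𝕋 𝕏 𝕐 : Type} [Fintype 𝕋] [Fintype 𝕏] [Fintype 𝕐]

/-- marginal of the target -/
def margT (p : 𝕋 → 𝕏 → 𝕐 → ℝ) (t : 𝕋) : ℝ := ∑ x, ∑ y, p t x y
def margX (p : 𝕋 → 𝕏 → 𝕐 → ℝ) (x : 𝕏) : ℝ := ∑ t, ∑ y, p t x y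
def margY (p : 𝕋 → 𝕏 → 𝕐 → ℝ) (y : 𝕐) : ℝ := ∑ t, ∑ x, p t x y
def margTX (p : 𝕋 → 𝕏 → 𝕐 → ℝ) (t : 𝕋) (x : 𝕏) : ℝ := ∑ y, p t x y
def margTY (p : 𝕋 → 𝕏 → 𝕐 → ℝ) (t : 𝕋) (y : 𝕐) : ℝ := ∑ x, p t x y
def margXY (p : 𝕋 → 𝕏 → 𝕐 → ℝ) (x : 𝕏) (y : 𝕐) : ℝ := ∑ t, p t x y

/-- mutual information I(T;X) (base-2 logs) -/
def miTX (p : 𝕋 → 𝕏 → 𝕐 → ℝ) : ℝ :=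
  ∑ t, ∑ x, margTX p t x * Real.logb 2 (margTX p t x / (margT p t * margX p x))
/-- mutual information I(T;Y) -/
def miTY (p : 𝕋 → 𝕏 → 𝕐 → ℝ) : ℝ :=
  ∑ t, ∑ y, margTY p t y * Real.logb 2 (margTY p t y / (margT p t * margY p y))
/-- joint mutual information I(T;X,Y) -/
def miTXY (p : 𝕋 → 𝕏 → 𝕐 → ℝ) : ℝ :=
  ∑ t, ∑ x, ∑ y, p t x y * Real.logb 2 (p t x y / (margT p t * margXY p x y))

/-- specific information I_spec(t;X) = D_KL(p(X|t) ‖ p(X)) -/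
def IspecX (p : 𝕋 → 𝕏 → 𝕐 → ℝ) (t : 𝕋) : ℝ :=
  ∑ x, (margTX p t x / margT p t) * Real.logb 2 ((margTX p t x / margT p t) / margX p x)
def IspecY (p : 𝕋 → 𝕏 → 𝕐 → ℝ) (t : 𝕋) : ℝ :=
  ∑ y, (margTY p t y / margT p t) * Real.logb 2 ((margTY p t y / margT p t) / margY p y)

/-- Williams–Beer redundancy -/
def red (p : 𝕋 → 𝕏 → 𝕐 → ℝ) : ℝ := ∑ t, margT p t * min (IspecX p t) (IspecY p t)

/-- `p` is a probability distribution -/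
def IsDist (p : 𝕋 → 𝕏 → 𝕐 → ℝ) : Prop :=
  (∀ t x y, 0 ≤ p t x y) ∧ (∑ t, ∑ x, ∑ y, p t x y) = 1

/-- conditional entropy H(T|X) (base-2 logs) -/
def condEntTX (p : 𝕋 → 𝕏 → 𝕐 → ℝ) : ℝ :=
  -∑ t, ∑ x, margTX p t x * Real.logb 2 (margTX p t x / margX p x)
/-- conditional entropy H(T|Y) -/
def condEntTY (p : 𝕋 → 𝕏 → 𝕐 → ℝ) : ℝ :=
  -∑ t, ∑ y, margTY p t y * Real.logb 2 (margTY p t y / margY p y)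
/-- entropy H(T) -/
def entT (p : 𝕋 → 𝕏 → 𝕐 → ℝ) : ℝ := -∑ t, margT p t * Real.logb 2 (margT p t)

namespace PIDaux

variable (p : 𝕋 → 𝕏 → 𝕐 → ℝ)

lemma margTX_nonneg (hp : ∀ t x y, 0 ≤ p t x y) (t : 𝕋) (x : 𝕏) : 0 ≤ margTX p t x :=
  Finset.sum_nonneg fun _ _ => hp _ _ _

lemma margTY_nonneg (hp : ∀ t x y, 0 ≤ p t x y) (t : 𝕋) (y : 𝕐) : 0 ≤ margTY p t y :=
  Finset.sum_nonneg fun _ _ => hp _ _ _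

lemma margX_eq (x : 𝕏) : margX p x = ∑ t, margTX p t x := rfl

lemma margT_eq (t : 𝕋) : margT p t = ∑ x, margTX p t x := rfl

lemma margT_eqY (t : 𝕋) : margT p t = ∑ y, margTY p t y := Finset.sum_comm

lemma margY_eq (y : 𝕐) : margY p y = ∑ t, margTY p t y := rfl

lemma margTX_le (hp : ∀ t x y, 0 ≤ p t x y) (t : 𝕋) (x : 𝕏) : margTX p t x ≤ margX p x := by
  rw [margX_eq]
  exact Finset.single_le_sum (fun i _ => margTX_nonneg p hp i x) (Finset.mem_univ t)

lemma margTY_le (hp : ∀ t x y, 0 ≤ p t x y) (t : 𝕋) (y : 𝕐) : margTY p t y ≤ margY p y := by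
  rw [margY_eq]
  exact Finset.single_le_sum (fun i _ => margTY_nonneg p hp i y) (Finset.mem_univ t)

lemma margTX_le_margT (hp : ∀ t x y, 0 ≤ p t x y) (t : 𝕋) (x : 𝕏) :
    margTX p t x ≤ margT p t := by
  rw [margT_eq]
  exact Finset.single_le_sum (fun i _ => margTX_nonneg p hp t i) (Finset.mem_univ x)

lemma margTY_le_margT (hp : ∀ t x y, 0 ≤ p t x y) (t : 𝕋) (y : 𝕐) :
    margTY p t y ≤ margT p t := by
  rw [margT_eqY]
  exact Finset.single_le_sum (fun i _ => margTY_nonneg p hp t i) (Finset.mem_univ y)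

lemma p_le_margTX (hp : ∀ t x y, 0 ≤ p t x y) (t : 𝕋) (x : 𝕏) (y : 𝕐) :
    p t x y ≤ margTX p t x :=
  Finset.single_le_sum (fun i _ => hp t x i) (Finset.mem_univ y)

/-- generic: a zero sum of `q a b * logb (q a b / Q b)` with `0 ≤ q ≤ Q` forces `q = 0 ∨ q = Q` -/
lemma det_aux {α β : Type} [Fintype α] [Fintype β] (q : α → β → ℝ) (Q : β → ℝ)
    (hq : ∀ a b, 0 ≤ q a b) (hle : ∀ a b, q a b ≤ Q b)
    (h : ∑ a, ∑ b, q a b * Real.logb 2 (q a b / Q b) = 0) (a : α) (b : β) :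
    q a b = 0 ∨ q a b = Q b := by
  have hterm : ∀ a b, q a b * Real.logb 2 (q a b / Q b) ≤ 0 := by
    intro a b
    have hQ : 0 ≤ Q b := le_trans (hq a b) (hle a b)
    exact mul_nonpos_of_nonneg_of_nonpos (hq a b)
      (Real.logb_nonpos one_lt_two (div_nonneg (hq a b) hQ) (div_le_one_of_le₀ (hle a b) hQ))
  have h1 : ∀ a ∈ (Finset.univ : Finset α),
      ∑ b, q a b * Real.logb 2 (q a b / Q b) = 0 :=
    (Finset.sum_eq_zero_iff_of_nonpos
      (fun a _ => Finset.sum_nonpos (fun b _ => hterm a b))).mp h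
  have hz' : q a b * Real.logb 2 (q a b / Q b) = 0 :=
    (Finset.sum_eq_zero_iff_of_nonpos (fun b _ => hterm a b)).mp
      (h1 a (Finset.mem_univ a)) b (Finset.mem_univ b)
  rcases mul_eq_zero.mp hz' with h0 | hl
  · exact Or.inl h0
  · rcases eq_or_lt_of_le (hq a b) with h0 | hpos
    · exact Or.inl h0.symm
    have hQpos : 0 < Q b := lt_of_lt_of_le hpos (hle a b)
    rcases Real.logb_eq_zero.mp hl with h2 | h2 | h2 | h2 | h2 | h2
    · norm_num at h2
    · norm_num at h2
    · norm_num at h2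
    · exact absurd h2 (ne_of_gt (div_pos hpos hQpos))
    · right
      field_simp at h2
      linarith
    · exfalso
      have := div_pos hpos hQpos
      linarith

lemma detX (hp : ∀ t x y, 0 ≤ p t x y) (hX : condEntTX p = 0) (t : 𝕋) (x : 𝕏) :
    margTX p t x = 0 ∨ margTX p t x = margX p x := by
  apply det_aux (fun t x => margTX p t x) (fun x => margX p x)
    (margTX_nonneg p hp) (margTX_le p hp)
  have h := neg_eq_zero.mp hX
  exact h

lemma detY (hp : ∀ t x y, 0 ≤ p t x y) (hY : condEntTY p = 0) (t : 𝕋) (y : 𝕐) :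
    margTY p t y = 0 ∨ margTY p t y = margY p y := by
  apply det_aux (fun t y => margTY p t y) (fun y => margY p y)
    (margTY_nonneg p hp) (margTY_le p hp)
  exact neg_eq_zero.mp hY

lemma ratio_inv {a b c : ℝ} (hab : a = b) (hb : b ≠ 0) : a / (c * b) = c⁻¹ := by
  rw [hab, mul_comm, div_mul_eq_div_div, div_self hb, one_div]

lemma miTX_eq_entT (hp : ∀ t x y, 0 ≤ p t x y) (hX : condEntTX p = 0) :
    miTX p = entT p := by
  unfold miTX entT
  rw [← Finset.sum_neg_distrib]
  apply Finset.sum_congr rfl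
  intro t _
  have key : ∀ x, margTX p t x * Real.logb 2 (margTX p t x / (margT p t * margX p x))
      = margTX p t x * (- Real.logb 2 (margT p t)) := by
    intro x
    by_cases h0 : margTX p t x = 0
    · rw [h0]; ring
    rcases detX p hp hX t x with h | heq
    · exact absurd h h0
    have hXne : margX p x ≠ 0 := by rw [← heq]; exact h0
    rw [ratio_inv heq hXne, Real.logb_inv]
  rw [Finset.sum_congr rfl (fun x _ => key x), ← Finset.sum_mul, ← margT_eq]
  ring

lemma miTY_eq_entT (hp : ∀ t x y, 0 ≤ p t x y) (hY : condEntTY p = 0) :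
    miTY p = entT p := by
  unfold miTY entT
  rw [← Finset.sum_neg_distrib]
  apply Finset.sum_congr rfl
  intro t _
  have key : ∀ y, margTY p t y * Real.logb 2 (margTY p t y / (margT p t * margY p y))
      = margTY p t y * (- Real.logb 2 (margT p t)) := by
    intro y
    by_cases h0 : margTY p t y = 0
    · rw [h0]; ring
    rcases detY p hp hY t y with h | heq
    · exact absurd h h0
    have hYne : margY p y ≠ 0 := by rw [← heq]; exact h0
    rw [ratio_inv heq hYne, Real.logb_inv]
  rw [Finset.sum_congr rfl (fun y _ => key y), ← Finset.sum_mul, ← margT_eqY]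
  ring

lemma IspecX_eq (hp : ∀ t x y, 0 ≤ p t x y) (hX : condEntTX p = 0) (t : 𝕋)
    (hT : margT p t ≠ 0) : IspecX p t = - Real.logb 2 (margT p t) := by
  unfold IspecX
  have key : ∀ x, (margTX p t x / margT p t) *
      Real.logb 2 ((margTX p t x / margT p t) / margX p x)
      = (margTX p t x / margT p t) * (- Real.logb 2 (margT p t)) := by
    intro x
    by_cases h0 : margTX p t x = 0
    · rw [h0]; ring
    rcases detX p hp hX t x with h | heq
    · exact absurd h h0
    have hXne : margX p x ≠ 0 := by rw [← heq]; exact h0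
    have : (margTX p t x / margT p t) / margX p x = (margT p t)⁻¹ := by
      rw [div_div]
      exact ratio_inv heq hXne
    rw [this, Real.logb_inv]
  rw [Finset.sum_congr rfl (fun x _ => key x), ← Finset.sum_mul, ← Finset.sum_div,
    ← margT_eq, div_self hT]
  ring

lemma IspecY_eq (hp : ∀ t x y, 0 ≤ p t x y) (hY : condEntTY p = 0) (t : 𝕋)
    (hT : margT p t ≠ 0) : IspecY p t = - Real.logb 2 (margT p t) := by
  unfold IspecY
  have key : ∀ y, (margTY p t y / margT p t) *
      Real.logb 2 ((margTY p t y / margT p t) / margY p y)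
      = (margTY p t y / margT p t) * (- Real.logb 2 (margT p t)) := by
    intro y
    by_cases h0 : margTY p t y = 0
    · rw [h0]; ring
    rcases detY p hp hY t y with h | heq
    · exact absurd h h0
    have hYne : margY p y ≠ 0 := by rw [← heq]; exact h0
    have : (margTY p t y / margT p t) / margY p y = (margT p t)⁻¹ := by
      rw [div_div]
      exact ratio_inv heq hYne
    rw [this, Real.logb_inv]
  rw [Finset.sum_congr rfl (fun y _ => key y), ← Finset.sum_mul, ← Finset.sum_div,
    ← margT_eqY, div_self hT]
  ring

lemma red_eq_entT (hp : ∀ t x y, 0 ≤ p t x y) (hX : condEntTX p = 0)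
    (hY : condEntTY p = 0) : red p = entT p := by
  unfold red entT
  rw [← Finset.sum_neg_distrib]
  apply Finset.sum_congr rfl
  intro t _
  by_cases hT : margT p t = 0
  · rw [hT]; ring
  rw [IspecX_eq p hp hX t hT, IspecY_eq p hp hY t hT, min_self]
  ring

lemma miTXY_eq_entT (hp : ∀ t x y, 0 ≤ p t x y) (hX : condEntTX p = 0) :
    miTXY p = entT p := by
  classical
  unfold miTXY entT
  rw [← Finset.sum_neg_distrib]
  apply Finset.sum_congr rfl
  intro t _
  have key : ∀ x y, p t x y * Real.logb 2 (p t x y / (margT p t * margXY p x y))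
      = p t x y * (- Real.logb 2 (margT p t)) := by
    intro x y
    by_cases h0 : p t x y = 0
    · rw [h0]; ring
    have hppos : 0 < p t x y := lt_of_le_of_ne (hp t x y) (Ne.symm h0)
    have hTXpos : 0 < margTX p t x := lt_of_lt_of_le hppos (p_le_margTX p hp t x y)
    have hTXeq : margTX p t x = margX p x := by
      rcases detX p hp hX t x with h | h
      · exact absurd h (ne_of_gt hTXpos)
      · exact h
    have hXpos : 0 < margX p x := hTXeq ▸ hTXpos
    -- margXY p x y = p t x y
    have hXY : margXY p x y = p t x y := by
      unfold margXY
      apply Finset.sum_eq_single t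
      · intro t' _ hne
        by_contra hne0
        have hppos' : 0 < p t' x y := lt_of_le_of_ne (hp t' x y) (Ne.symm hne0)
        have hTXpos' : 0 < margTX p t' x := lt_of_lt_of_le hppos' (p_le_margTX p hp t' x y)
        have hTXeq' : margTX p t' x = margX p x := by
          rcases detX p hp hX t' x with h | h
          · exact absurd h (ne_of_gt hTXpos')
          · exact h
        have hsum : margTX p t x + margTX p t' x ≤ margX p x := by
          rw [margX_eq]
          calc margTX p t x + margTX p t' x
              = ∑ i ∈ ({t, t'} : Finset 𝕋), margTX p i x := by
                rw [Finset.sum_pair hne.symm]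
            _ ≤ ∑ i, margTX p i x :=
                Finset.sum_le_sum_of_subset_of_nonneg (Finset.subset_univ _)
                  (fun i _ _ => margTX_nonneg p hp i x)
        rw [hTXeq, hTXeq'] at hsum
        linarith
      · intro h
        exact absurd (Finset.mem_univ t) h
    have hXYne : margXY p x y ≠ 0 := by rw [hXY]; exact h0
    rw [ratio_inv hXY.symm hXYne, Real.logb_inv]
  calc ∑ x, ∑ y, p t x y * Real.logb 2 (p t x y / (margT p t * margXY p x y))
      = ∑ x, ∑ y, p t x y * (- Real.logb 2 (margT p t)) := by
        exact Finset.sum_congr rfl fun x _ => Finset.sum_congr rfl fun y _ => key x y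
    _ = (∑ x, ∑ y, p t x y) * (- Real.logb 2 (margT p t)) := by
        simp only [← Finset.sum_mul]
    _ = -(margT p t * Real.logb 2 (margT p t)) := by rw [← margT]; ring

end PIDaux

theorem deterministic_source_redundancy (p : 𝕋 → 𝕏 → 𝕐 → ℝ) (hp : IsDist p)
    (hX : condEntTX p = 0) (hY : condEntTY p = 0) :
    red p = miTX p ∧ miTX p = miTY p ∧ miTY p = entT p ∧
    miTX p - red p = 0 ∧ miTY p - red p = 0 ∧
    miTXY p - miTX p - miTY p + red p = 0 := by
  obtain ⟨hnn, -⟩ := hp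
  have h1 := PIDaux.miTX_eq_entT p hnn hX
  have h2 := PIDaux.miTY_eq_entT p hnn hY
  have h3 := PIDaux.red_eq_entT p hnn hX hY
  have h4 := PIDaux.miTXY_eq_entT p hnn hX
  refine ⟨by rw [h1, h3], by rw [h1, h2], h2, by rw [h1, h3]; ring,
    by rw [h2, h3]; ring, by rw [h1, h2, h3, h4]; ring⟩
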